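/- Let n ≥ 1, T > 0, α₁, …, αₙ ∈ (0,1), and let p > max{1/α_j : j ∈ {1,…,n}}. Let f = (f₁,…,fₙ) : ℝⁿ × [0,T] → ℝⁿ be an L^p-Carathéodory function, ξ ∈ ℝⁿ, and let φ = (φ₁,…,φₙ) : [0,T] → ℝⁿ be continuous and satisfy φ_j(t) = ξ_j + (1/Γ(α_j)) ∫₀ᵗ (t−s)^{α_j−1} f_j(φ(s), s) ds for every j and every t ∈ [0,T]. Then φ(0) = ξ and, for each j ∈ {1,…,n}, J^{1−α_j}(φ_j − ξ_j)(t) = ∫₀ᵗ f_j(φ(s), s) ds for all t ∈ [0,T]; in particular J^{1−α_j}(φ_j − ξ_j) belongs to W^{1,p}(0,T) and its weak derivative equals f_j(φ(t), t) for a.e. t, i.e., ᶜD^{α_j}_t φ_j(t) = f_j(φ(t), t) a.e. on [0,T]. -/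

import Mathlib

open MeasureTheory Real Set

/-- The Riemann–Liouville fractional integral of order `α`:
`J^α g (t) = (1/Γ(α)) ∫₀ᵗ (t-s)^(α-1) g(s) ds`. -/
noncomputable def rlInt {E : Type*} [NormedAddCommGroup E] [NormedSpace ℝ E]
    (α : ℝ) (g : ℝ → E) (t : ℝ) : E :=
  (Real.Gamma α)⁻¹ • ∫ s in (0:ℝ)..t, (t - s) ^ (α - 1) • g s

/-- `f : ℝⁿ × [0,T] → ℝⁿ` is a Carathéodory function: `x ↦ f x t` is continuous for a.e.
`t ∈ [0,T]` and `t ↦ f x t` is Lebesgue measurable for every `x`. -/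
def IsCaratheodory {n : ℕ} (T : ℝ)
    (f : EuclideanSpace ℝ (Fin n) → ℝ → EuclideanSpace ℝ (Fin n)) : Prop :=
  (∀ᵐ t ∂(volume.restrict (Icc (0:ℝ) T)), Continuous fun x => f x t) ∧
  ∀ x, Measurable fun t => f x t

/-- `f` is an `L^p`-Carathéodory function: Carathéodory, with an `L^p` growth bound
`‖f(x,t)‖ ≤ C‖x‖ + γ(t)` and an `L^p` Lipschitz bound `‖f(x,t) - f(y,t)‖ ≤ ℓ(t)‖x - y‖`. -/
def IsLpCaratheodory {n : ℕ} (p T : ℝ)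
    (f : EuclideanSpace ℝ (Fin n) → ℝ → EuclideanSpace ℝ (Fin n)) : Prop :=
  IsCaratheodory T f ∧
  (∃ C > (0:ℝ), ∃ γ : ℝ → ℝ, MemLp γ (ENNReal.ofReal p) (volume.restrict (Icc (0:ℝ) T)) ∧
    ∀ᵐ t ∂(volume.restrict (Icc (0:ℝ) T)), ∀ x, ‖f x t‖ ≤ C * ‖x‖ + γ t) ∧
  (∃ ℓ : ℝ → ℝ, MemLp ℓ (ENNReal.ofReal p) (volume.restrict (Icc (0:ℝ) T)) ∧
    ∀ᵐ t ∂(volume.restrict (Icc (0:ℝ) T)), ∀ x y, ‖f x t - f y t‖ ≤ ℓ t * ‖x - y‖)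

section Helpers

lemma betaReal_eq {a : ℝ} (ha : 0 < a) (ha1 : a < 1) :
    ∫ u in (0:ℝ)..1, u ^ (a - 1) * (1 - u) ^ (-a) = Real.Gamma a * Real.Gamma (1 - a) := by
  have h1a : 0 < 1 - a := by linarith
  have hc := Complex.Gamma_mul_Gamma_eq_betaIntegral
      (s := (a : ℂ)) (t := ((1 - a : ℝ) : ℂ)) (by simpa using ha) (by simpa using h1a)
  have hsum : (a : ℂ) + ((1 - a : ℝ) : ℂ) = 1 := by push_cast; ring
  rw [hsum, Complex.Gamma_one, one_mul] at hc
  have hbeta : Complex.betaIntegral (a : ℂ) ((1 - a : ℝ) : ℂ)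
      = ((∫ u in (0:ℝ)..1, u ^ (a - 1) * (1 - u) ^ (-a) : ℝ) : ℂ) := by
    rw [Complex.betaIntegral, ← intervalIntegral.integral_ofReal]
    apply intervalIntegral.integral_congr
    intro x hx
    rw [uIcc_of_le (by norm_num : (0:ℝ) ≤ 1)] at hx
    have hx0 : (0:ℝ) ≤ x := hx.1
    have hx1 : (0:ℝ) ≤ 1 - x := by linarith [hx.2]
    simp only [Complex.ofReal_mul, Complex.ofReal_cpow hx0, Complex.ofReal_cpow hx1]
    push_cast
    ring_nf
  rw [hbeta] at hc
  rw [Complex.Gamma_ofReal, Complex.Gamma_ofReal, ← Complex.ofReal_mul] at hc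
  exact_mod_cast hc.symm

lemma kernel_intervalIntegrable {a r t : ℝ} (ha : 0 < a) (ha1 : a < 1) (hrt : r < t) :
    IntervalIntegrable (fun s => (t - s) ^ (-a) * (s - r) ^ (a - 1)) volume r t := by
  set m := (r + t) / 2 with hm
  have hrm : r < m := by rw [hm]; linarith
  have hmt : m < t := by rw [hm]; linarith
  have h1 : IntervalIntegrable (fun s => (t - s) ^ (-a) * (s - r) ^ (a - 1)) volume r m := by
    have hbase : IntervalIntegrable (fun x : ℝ => x ^ (a - 1)) volume 0 (m - r) :=
      intervalIntegral.intervalIntegrable_rpow' (by linarith)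
    have hshift := hbase.comp_add_right (-r)
    simp only [sub_neg_eq_add, zero_sub, neg_neg, sub_sub_cancel] at hshift
    have hshift' : IntervalIntegrable (fun x : ℝ => (x - r) ^ (a - 1)) volume r m := by
      simpa [sub_eq_add_neg] using hshift
    apply hshift'.continuousOn_mul
    apply ContinuousOn.rpow_const (by fun_prop)
    intro x hx
    rw [uIcc_of_le hrm.le] at hx
    exact Or.inl (by linarith [hx.2])
  have h2 : IntervalIntegrable (fun s => (t - s) ^ (-a) * (s - r) ^ (a - 1)) volume m t := by
    have hbase : IntervalIntegrable (fun x : ℝ => x ^ (-a)) volume 0 (t - m) :=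
      intervalIntegral.intervalIntegrable_rpow' (by linarith)
    have hshift := (hbase.comp_sub_left t).symm
    simp only [sub_zero, sub_sub_cancel] at hshift
    apply hshift.mul_continuousOn
    apply ContinuousOn.rpow_const (by fun_prop)
    intro x hx
    rw [uIcc_of_le hmt.le] at hx
    exact Or.inl (by simp only [ne_eq, sub_eq_zero]; intro h; subst h; linarith [hx.1])
  exact h1.trans h2

lemma kernel_integral_eq {a r t : ℝ} (ha : 0 < a) (ha1 : a < 1) (hrt : r < t) :
    ∫ s in r..t, (t - s) ^ (-a) * (s - r) ^ (a - 1) = Real.Gamma a * Real.Gamma (1 - a) := by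
  have hc : t - r ≠ 0 := by intro h; linarith [sub_eq_zero.mp h]
  have hc0 : 0 < t - r := by linarith
  have hsub := intervalIntegral.integral_comp_mul_add
      (a := 0) (b := 1) (fun s => (t - s) ^ (-a) * (s - r) ^ (a - 1)) hc r
  simp only [mul_zero, zero_add, mul_one, smul_eq_mul] at hsub
  have hend : t - r + r = t := by ring
  rw [hend] at hsub
  have hpt : ∀ u ∈ uIcc (0:ℝ) 1,
      (t - ((t - r) * u + r)) ^ (-a) * ((t - r) * u + r - r) ^ (a - 1)
        = (t - r)⁻¹ * (u ^ (a - 1) * (1 - u) ^ (-a)) := by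
    intro u hu
    rw [uIcc_of_le (by norm_num : (0:ℝ) ≤ 1)] at hu
    have h1 : t - ((t - r) * u + r) = (t - r) * (1 - u) := by ring
    have h2 : (t - r) * u + r - r = (t - r) * u := by ring
    rw [h1, h2, Real.mul_rpow hc0.le (by linarith [hu.2]), Real.mul_rpow hc0.le hu.1]
    have h3 : (t - r) ^ (-a) * (t - r) ^ (a - 1) = (t - r)⁻¹ := by
      rw [← Real.rpow_add hc0]
      have : -a + (a - 1) = -1 := by ring
      rw [this]
      exact Real.rpow_neg_one _
    calc (t - r) ^ (-a) * (1 - u) ^ (-a) * ((t - r) ^ (a - 1) * u ^ (a - 1))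
        = ((t - r) ^ (-a) * (t - r) ^ (a - 1)) * ((1 - u) ^ (-a) * u ^ (a - 1)) := by ring
      _ = (t - r)⁻¹ * (u ^ (a - 1) * (1 - u) ^ (-a)) := by rw [h3]; ring
  rw [intervalIntegral.integral_congr hpt, intervalIntegral.integral_const_mul,
      betaReal_eq ha ha1] at hsub
  exact (mul_left_cancel₀ (inv_ne_zero hc) hsub).symm

lemma nemytskii_aesm {n : ℕ} {T : ℝ} (hT : 0 < T)
    {f : EuclideanSpace ℝ (Fin n) → ℝ → EuclideanSpace ℝ (Fin n)}
    (hcont : ∀ᵐ t ∂(volume.restrict (Icc (0:ℝ) T)), Continuous fun x => f x t)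
    (hmeas : ∀ x, Measurable fun t => f x t)
    {φ : ℝ → EuclideanSpace ℝ (Fin n)} (hφ : ContinuousOn φ (Icc 0 T)) :
    AEStronglyMeasurable (fun s => f (φ s) s) (volume.restrict (Icc (0:ℝ) T)) := by
  set c : ℝ → ℝ := fun s => max 0 (min s T) with hc
  have hcmem : ∀ s, c s ∈ Icc (0:ℝ) T := fun s =>
    ⟨le_max_left _ _, max_le hT.le (min_le_right _ _)⟩
  have hΦ : Continuous (fun s => φ (c s)) :=
    hφ.comp_continuous (by fun_prop) hcmem
  set Φ : ℝ → EuclideanSpace ℝ (Fin n) := fun s => φ (c s) with hΦdef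
  set q : ℕ → ℝ → ℝ := fun k s => (⌊s * (k + 1)⌋ : ℤ) / (k + 1) with hq
  have hqtendsto : ∀ s, Filter.Tendsto (fun k => q k s) Filter.atTop (nhds s) := by
    intro s
    have h1 : Filter.Tendsto (fun k : ℕ => s - 1 / (k + 1)) Filter.atTop (nhds s) := by
      have := tendsto_one_div_add_atTop_nhds_zero_nat (𝕜 := ℝ)
      simpa using (tendsto_const_nhds (x := s)).sub this
    have h2 : Filter.Tendsto (fun _ : ℕ => s) Filter.atTop (nhds s) := tendsto_const_nhds
    apply tendsto_of_tendsto_of_tendsto_of_le_of_le h1 h2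
    · intro k
      have hk : (0:ℝ) < k + 1 := by positivity
      have h := Int.sub_one_lt_floor (s * (k + 1))
      show s - 1 / (k + 1) ≤ (⌊s * ((k:ℝ) + 1)⌋ : ℝ) / ((k:ℝ) + 1)
      rw [le_div_iff₀ hk]
      have heq : (s - 1 / ((k:ℝ) + 1)) * ((k:ℝ) + 1) = s * ((k:ℝ) + 1) - 1 := by field_simp
      rw [heq]
      linarith
    · intro k
      have hk : (0:ℝ) < k + 1 := by positivity
      have h := Int.floor_le (s * (k + 1))
      show (⌊s * ((k:ℝ) + 1)⌋ : ℝ) / ((k:ℝ) + 1) ≤ s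
      rw [div_le_iff₀ hk]
      exact h
  have hψmeas : ∀ k : ℕ, Measurable (fun s => f (Φ (q k s)) s) := by
    intro k
    have hu : Measurable (fun p : ℝ × ℤ => f (Φ ((p.2 : ℝ) / (k + 1))) p.1) := by
      apply measurable_from_prod_countable_left
      intro m
      exact hmeas (Φ ((m : ℝ) / (k + 1)))
    have hfloor : Measurable fun s : ℝ => (s, ⌊s * ((k:ℝ) + 1)⌋) :=
      measurable_id.prodMk (Int.measurable_floor.comp (by fun_prop))
    exact hu.comp hfloor
  have hae : ∀ᵐ s ∂(volume.restrict (Icc (0:ℝ) T)),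
      Filter.Tendsto (fun k => f (Φ (q k s)) s) Filter.atTop (nhds (f (φ s) s)) := by
    filter_upwards [hcont, ae_restrict_mem measurableSet_Icc] with s hs hsmem
    have hφs : Φ s = φ s := by
      have : c s = s := by
        rw [hc]
        simp only [min_eq_left hsmem.2, max_eq_right hsmem.1]
      show φ (c s) = φ s
      rw [this]
    have h1 : Filter.Tendsto (fun k => Φ (q k s)) Filter.atTop (nhds (φ s)) := by
      rw [← hφs]
      exact (hΦ.tendsto s).comp (hqtendsto s)
    exact (hs.tendsto _).comp h1
  have := aemeasurable_of_tendsto_metrizable_ae Filter.atTop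
    (fun k => (hψmeas k).aemeasurable) hae
  exact this.aestronglyMeasurable

end Helpers

theorem integral_solution_solves_caputo_system
    (n : ℕ) (hn : 1 ≤ n) (T : ℝ) (hT : 0 < T)
    (α : Fin n → ℝ) (hα : ∀ j, α j ∈ Ioo (0:ℝ) 1)
    (p : ℝ) (hp : ∀ j, 1 / α j < p)
    (f : EuclideanSpace ℝ (Fin n) → ℝ → EuclideanSpace ℝ (Fin n))
    (hf : IsLpCaratheodory p T f) (ξ : EuclideanSpace ℝ (Fin n))
    (φ : ℝ → EuclideanSpace ℝ (Fin n))
    (hφ : ContinuousOn φ (Icc 0 T))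
    (hsol : ∀ j, ∀ t ∈ Icc (0:ℝ) T,
      φ t j = ξ j + (Real.Gamma (α j))⁻¹ * ∫ s in (0:ℝ)..t, (t - s) ^ (α j - 1) * f (φ s) s j) :
    φ 0 = ξ ∧
    ∀ j, (∀ t ∈ Icc (0:ℝ) T,
        rlInt (1 - α j) (fun s => φ s j - ξ j) t = ∫ s in (0:ℝ)..t, f (φ s) s j) ∧
      MemLp (fun s => f (φ s) s j) (ENNReal.ofReal p) (volume.restrict (Icc (0:ℝ) T)) := by
  obtain ⟨⟨hcont, hmeas⟩, ⟨C, hC, γ, hγ, hgrow⟩, -⟩ := hf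
  haveI : IsFiniteMeasure (volume.restrict (Icc (0:ℝ) T)) :=
    ⟨by rw [Measure.restrict_apply_univ]; exact measure_Icc_lt_top⟩
  -- p is at least 1
  have hp1 : 1 < p := by
    have j0 : Fin n := ⟨0, hn⟩
    have h1 : 1 < 1 / α j0 := one_lt_one_div (hα j0).1 (hα j0).2
    linarith [hp j0]
  have hp1' : (1 : ENNReal) ≤ ENNReal.ofReal p := by
    rw [← ENNReal.ofReal_one]
    exact ENNReal.ofReal_le_ofReal hp1.le
  -- measurability of the Nemytskii function
  have hG : AEStronglyMeasurable (fun s => f (φ s) s) (volume.restrict (Icc (0:ℝ) T)) :=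
    nemytskii_aesm hT hcont hmeas hφ
  -- Memℒp of the Nemytskii function
  obtain ⟨M, hM⟩ := isCompact_Icc.exists_bound_of_continuousOn hφ
  have hGp : MemLp (fun s => f (φ s) s) (ENNReal.ofReal p) (volume.restrict (Icc (0:ℝ) T)) := by
    apply MemLp.of_le ((memLp_const (C * M)).add hγ.norm) hG
    filter_upwards [hgrow, ae_restrict_mem measurableSet_Icc] with s hs hsmem
    have h1 : ‖f (φ s) s‖ ≤ C * M + ‖γ s‖ := by
      calc ‖f (φ s) s‖ ≤ C * ‖φ s‖ + γ s := hs _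
        _ ≤ C * M + ‖γ s‖ := by
            have := hM s hsmem
            have hle : γ s ≤ ‖γ s‖ := le_abs_self _
            nlinarith [norm_nonneg (φ s)]
    calc ‖f (φ s) s‖ ≤ C * M + ‖γ s‖ := h1
      _ ≤ ‖C * M + ‖γ s‖‖ := le_abs_self _
  -- componentwise Memℒp
  have hGpj : ∀ j, MemLp (fun s => f (φ s) s j) (ENNReal.ofReal p)
      (volume.restrict (Icc (0:ℝ) T)) := by
    intro j
    exact (EuclideanSpace.proj (𝕜 := ℝ) j).comp_memLp' hGp
  -- φ 0 = ξ
  have hzero : φ 0 = ξ := by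
    ext j
    have := hsol j 0 ⟨le_refl 0, hT.le⟩
    simpa [intervalIntegral.integral_same] using this
  refine ⟨hzero, fun j => ⟨?_, hGpj j⟩⟩
  intro t ht
  set a := α j with ha_def
  have ha : 0 < a := (hα j).1
  have ha1 : a < 1 := (hα j).2
  set g : ℝ → ℝ := fun s => f (φ s) s j with hg_def
  -- trivial case t = 0
  rcases eq_or_lt_of_le ht.1 with h0 | h0t
  · rw [← h0]
    simp [rlInt, intervalIntegral.integral_same]
  -- interesting case 0 < t
  have hΓa : Real.Gamma a ≠ 0 := (Real.Gamma_pos_of_pos ha).ne'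
  have hΓ1a : Real.Gamma (1 - a) ≠ 0 := (Real.Gamma_pos_of_pos (by linarith)).ne'
  set B := Real.Gamma a * Real.Gamma (1 - a) with hB_def
  -- integrability of g on (0, t]
  have hsub : Ioc (0:ℝ) t ⊆ Icc (0:ℝ) T := fun x hx => ⟨hx.1.le, hx.2.trans ht.2⟩
  have hInt : IntegrableOn g (Ioc 0 t) volume :=
    ((hGpj j).integrable hp1').mono_measure (Measure.restrict_mono hsub le_rfl)
  set μ := volume.restrict (Ioc (0:ℝ) t) with hμ_def
  -- definition of the kernel on the product space
  set H : ℝ × ℝ → ℝ := fun z =>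
    (Ioo z.2 t).indicator (fun s' => (t - s') ^ (-a) * (s' - z.2) ^ (a - 1)) z.1 * g z.2
    with hH_def
  -- a.e. points of μ are in the open interval
  have hae_Ioo : ∀ᵐ r ∂μ, r ∈ Ioo (0:ℝ) t := by
    have h1 : ∀ᵐ r ∂μ, r ∈ Ioc (0:ℝ) t := ae_restrict_mem measurableSet_Ioc
    have h2 : ∀ᵐ r ∂μ, r ≠ t := by
      rw [ae_iff]
      have : {r : ℝ | ¬r ≠ t} = {t} := by ext; simp
      rw [this]
      exact le_antisymm ((Measure.restrict_le_self _).trans_eq (measure_singleton t)) (by simp)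
    filter_upwards [h1, h2] with r hr hrt
    exact ⟨hr.1, lt_of_le_of_ne hr.2 hrt⟩
  -- kernel integrability and value of the inner integral
  have hker : ∀ r ∈ Ioo (0:ℝ) t,
      IntegrableOn (fun s' => (t - s') ^ (-a) * (s' - r) ^ (a - 1)) (Ioo r t) volume := by
    intro r hr
    have := (intervalIntegrable_iff_integrableOn_Ioc_of_le hr.2.le).mp
      (kernel_intervalIntegrable ha ha1 hr.2)
    exact this.mono_set Ioo_subset_Ioc_self
  have hind_nonneg : ∀ r, ∀ s,
      0 ≤ (Ioo r t).indicator (fun s' => (t - s') ^ (-a) * (s' - r) ^ (a - 1)) s := by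
    intro r s
    apply Set.indicator_nonneg
    intro x hx
    have h1 : 0 ≤ t - x := by linarith [hx.2]
    have h2 : 0 ≤ x - r := by linarith [hx.1]
    positivity
  have hind_int : ∀ r ∈ Ioo (0:ℝ) t,
      ∫ s, (Ioo r t).indicator (fun s' => (t - s') ^ (-a) * (s' - r) ^ (a - 1)) s ∂μ = B := by
    intro r hr
    rw [hμ_def, setIntegral_indicator measurableSet_Ioo]
    have hss : Ioc (0:ℝ) t ∩ Ioo r t = Ioo r t :=
      inter_eq_self_of_subset_right (fun x hx => ⟨lt_trans hr.1 hx.1, hx.2.le⟩)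
    rw [hss, ← integral_Ioc_eq_integral_Ioo,
      ← intervalIntegral.integral_of_le hr.2.le]
    exact kernel_integral_eq ha ha1 hr.2
  -- integrability of sections
  have hsec : ∀ r ∈ Ioo (0:ℝ) t, Integrable (fun s => H (s, r)) μ := by
    intro r hr
    have h1 : Integrable ((Ioo r t).indicator
        (fun s' => (t - s') ^ (-a) * (s' - r) ^ (a - 1))) volume :=
      (integrable_indicator_iff measurableSet_Ioo).mpr (hker r hr)
    exact (h1.restrict.mul_const (g r))
  -- strong measurability of H
  have hHm : AEStronglyMeasurable H (μ.prod μ) := by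
    have hset : MeasurableSet {z : ℝ × ℝ | z.2 < z.1 ∧ z.1 < t} :=
      (measurableSet_lt measurable_snd measurable_fst).inter
        (measurableSet_lt measurable_fst measurable_const)
    have hk : Measurable (fun z : ℝ × ℝ => (t - z.1) ^ (-a) * (z.1 - z.2) ^ (a - 1)) := by
      fun_prop
    have heq : H = fun z : ℝ × ℝ =>
        ({z : ℝ × ℝ | z.2 < z.1 ∧ z.1 < t}.indicator
          (fun z => (t - z.1) ^ (-a) * (z.1 - z.2) ^ (a - 1)) z) * g z.2 := by
      funext z
      rw [hH_def]
      simp only [Set.indicator_apply, mem_Ioo, Set.mem_setOf_eq]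
    rw [heq]
    apply AEStronglyMeasurable.mul
    · exact (hk.indicator hset).aestronglyMeasurable
    · exact hInt.aestronglyMeasurable.comp_quasiMeasurePreserving
        Measure.quasiMeasurePreserving_snd
  -- integrability of H on the product
  have hHnorm : ∀ r ∈ Ioo (0:ℝ) t, ∫ s, ‖H (s, r)‖ ∂μ = B * ‖g r‖ := by
    intro r hr
    have heq : (fun s => ‖H (s, r)‖) = fun s =>
        (Ioo r t).indicator (fun s' => (t - s') ^ (-a) * (s' - r) ^ (a - 1)) s * ‖g r‖ := by
      funext s
      rw [hH_def]
      simp only [norm_mul]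
      rw [Real.norm_of_nonneg (hind_nonneg r s)]
    rw [heq, integral_mul_const, hind_int r hr]
  have hHint : Integrable H (μ.prod μ) := by
    rw [show H = Function.uncurry (fun s r => H (s, r)) from rfl] at hHm ⊢
    rw [integrable_prod_iff' hHm]
    constructor
    · filter_upwards [hae_Ioo] with r hr
      exact hsec r hr
    · apply Integrable.congr ((hInt.norm.const_mul B))
      filter_upwards [hae_Ioo] with r hr
      exact (hHnorm r hr).symm
  -- the swap of integrals
  have hswap : ∫ s, (∫ r, H (s, r) ∂μ) ∂μ = ∫ r, (∫ s, H (s, r) ∂μ) ∂μ :=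
    integral_integral_swap hHint
  -- value of the s-integral for fixed r
  have hsint : ∀ r ∈ Ioo (0:ℝ) t, ∫ s, H (s, r) ∂μ = B * g r := by
    intro r hr
    have heq : (fun s => H (s, r)) = fun s =>
        (Ioo r t).indicator (fun s' => (t - s') ^ (-a) * (s' - r) ^ (a - 1)) s * g r := rfl
    rw [heq, integral_mul_const, hind_int r hr]
  -- value of the r-integral for fixed s
  have hrint : ∀ s ∈ Ioo (0:ℝ) t, ∫ r, H (s, r) ∂μ
      = (t - s) ^ (-a) * ∫ r in (0:ℝ)..s, (s - r) ^ (a - 1) * g r := by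
    intro s hs
    have heq : ∀ r, H (s, r) = (Iio s).indicator
        (fun r' => (t - s) ^ (-a) * (s - r') ^ (a - 1) * g r') r := by
      intro r
      rw [hH_def]
      simp only [Set.indicator_apply, mem_Ioo, mem_Iio]
      by_cases hlt : r < s
      · simp only [hlt, hs.2, and_true, if_true]
      · simp only [hlt, false_and, if_false, zero_mul]
    simp only [heq]
    rw [hμ_def, setIntegral_indicator measurableSet_Iio]
    have hss : Ioc (0:ℝ) t ∩ Iio s = Ioo 0 s := by
      ext x
      simp only [mem_inter_iff, mem_Ioc, mem_Iio, mem_Ioo]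
      constructor
      · rintro ⟨⟨h1, h2⟩, h3⟩; exact ⟨h1, h3⟩
      · rintro ⟨h1, h2⟩; exact ⟨⟨h1, le_trans h2.le hs.2.le⟩, h2⟩
    rw [hss, ← integral_Ioc_eq_integral_Ioo, ← intervalIntegral.integral_of_le hs.1.le]
    rw [← intervalIntegral.integral_const_mul]
    apply intervalIntegral.integral_congr
    intro x _
    ring
  -- now assemble everything
  rw [rlInt]
  have hexp : 1 - a - 1 = -a := by ring
  have hΓinv : (Real.Gamma (1 - a))⁻¹ * ((Real.Gamma a)⁻¹ * B) = 1 := by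
    rw [hB_def]
    field_simp
  -- rewrite both sides as set integrals over Ioc 0 t
  rw [intervalIntegral.integral_of_le h0t.le, intervalIntegral.integral_of_le h0t.le]
  simp only [smul_eq_mul, hexp]
  -- step 1: substitute the integral equation
  have step1 : ∫ s in Ioc (0:ℝ) t, (t - s) ^ (-a) * (φ s j - ξ j)
      = (Real.Gamma a)⁻¹ * ∫ s in Ioc (0:ℝ) t,
          (t - s) ^ (-a) * ∫ r in (0:ℝ)..s, (s - r) ^ (a - 1) * g r := by
    rw [← integral_const_mul]
    apply setIntegral_congr_fun measurableSet_Ioc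
    intro s hs
    have := hsol j s ⟨hs.1.le, hs.2.trans ht.2⟩
    have heq : φ s j - ξ j = (Real.Gamma a)⁻¹ * ∫ r in (0:ℝ)..s, (s - r) ^ (a - 1) * g r := by
      rw [this]
      simp only [ha_def, hg_def]
      ring
    show (t - s) ^ (-a) * (φ s j - ξ j)
        = (Real.Gamma a)⁻¹ * ((t - s) ^ (-a) * ∫ r in (0:ℝ)..s, (s - r) ^ (a - 1) * g r)
    rw [heq]
    ring
  -- step 2: identify with the double integral
  have step2 : ∫ s in Ioc (0:ℝ) t,
      (t - s) ^ (-a) * ∫ r in (0:ℝ)..s, (s - r) ^ (a - 1) * g r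
      = ∫ s, (∫ r, H (s, r) ∂μ) ∂μ := by
    rw [hμ_def, integral_Ioc_eq_integral_Ioo, integral_Ioc_eq_integral_Ioo]
    apply setIntegral_congr_fun measurableSet_Ioo
    intro s hs
    exact (hrint s hs).symm
  -- step 3: evaluate after swapping
  have step3 : ∫ r, (∫ s, H (s, r) ∂μ) ∂μ = B * ∫ r in Ioc (0:ℝ) t, g r := by
    rw [← integral_const_mul]
    apply integral_congr_ae
    filter_upwards [hae_Ioo] with r hr
    exact hsint r hr
  rw [step1, step2, hswap, step3]
  calc (Real.Gamma (1 - a))⁻¹ * ((Real.Gamma a)⁻¹ * (B * ∫ r in Ioc (0:ℝ) t, g r))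
      = ((Real.Gamma (1 - a))⁻¹ * ((Real.Gamma a)⁻¹ * B)) * ∫ r in Ioc (0:ℝ) t, g r := by ring
    _ = ∫ r in Ioc (0:ℝ) t, g r := by rw [hΓinv, one_mul]
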